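/- Let V be a real topological vector space and Q : V → ℝ a continuous quadratic form (Q(v)=H(v,v) for a symmetric bilinear form H). Suppose that for every finite-dimensional subspace W ⊆ V there exist u, w ∈ V with H(u,W)=0, H(w,W)=0, Q(u)>0 and Q(w)<0 (i.e., the positive and negative parts of Q are 'infinite-dimensional relative to H-orthogonality'). Then for every a ∈ ℝ and every v₀, v₁ ∈ V with Q(v₀)=Q(v₁)=a, there is a continuous path from v₀ to v₁ inside the level set Q⁻¹(a). -/

import Mathlib

private lemma expand_aux {V : Type*} [AddCommGroup V] [Module ℝ V]
    (H : V →ₗ[ℝ] V →ₗ[ℝ] ℝ) (hsym : ∀ x y, H x y = H y x)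
    (x u w : V) (α β : ℝ) (hxu : H u x = 0) (hxw : H w x = 0) (huw : H w u = 0) :
    H (x + α • u + β • w) (x + α • u + β • w)
      = H x x + α ^ 2 * H u u + β ^ 2 * H w w := by
  have h1 : H x u = 0 := (hsym x u).trans hxu
  have h2 : H x w = 0 := (hsym x w).trans hxw
  have h3 : H u w = 0 := (hsym u w).trans huw
  simp only [map_add, map_smul, LinearMap.add_apply, LinearMap.smul_apply,
    smul_eq_mul, h1, h2, h3, hxu, hxw, huw]
  ring

theorem level_sets_path_connected
    {V : Type*} [AddCommGroup V] [Module ℝ V] [TopologicalSpace V]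
    [IsTopologicalAddGroup V] [ContinuousSMul ℝ V]
    (H : V →ₗ[ℝ] V →ₗ[ℝ] ℝ) (hsym : ∀ x y, H x y = H y x)
    (hcont : Continuous fun p : V × V => H p.1 p.2)
    (hindef : ∀ W : Submodule ℝ V, FiniteDimensional ℝ W →
      ∃ u w : V, (∀ y ∈ W, H u y = 0) ∧ (∀ y ∈ W, H w y = 0) ∧
        0 < H u u ∧ H w w < 0)
    (a : ℝ) (v₀ v₁ : V) (h₀ : H v₀ v₀ = a) (h₁ : H v₁ v₁ = a) :
    JoinedIn {v : V | H v v = a} v₀ v₁ := by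
  have hW₀ : FiniteDimensional ℝ (Submodule.span ℝ ({v₀, v₁} : Set V)) :=
    FiniteDimensional.span_of_finite ℝ (Set.toFinite _)
  obtain ⟨u, -, hu, -, hupos, -⟩ := hindef _ hW₀
  have hW₁ : FiniteDimensional ℝ (Submodule.span ℝ ({v₀, v₁, u} : Set V)) :=
    FiniteDimensional.span_of_finite ℝ (Set.toFinite _)
  obtain ⟨-, w, -, hw, -, hwneg⟩ := hindef _ hW₁
  have huv₀ : H u v₀ = 0 := hu v₀ (Submodule.subset_span (by simp))
  have huv₁ : H u v₁ = 0 := hu v₁ (Submodule.subset_span (by simp))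
  have hwv₀ : H w v₀ = 0 := hw v₀ (Submodule.subset_span (by simp))
  have hwv₁ : H w v₁ = 0 := hw v₁ (Submodule.subset_span (by simp))
  have hwu : H w u = 0 := hw u (Submodule.subset_span (by simp))
  set x : ℝ → V := fun t => (1 - t) • v₀ + t • v₁ with hx_def
  set d : ℝ → ℝ := fun t => a - H (x t) (x t) with hd_def
  set α : ℝ → ℝ := fun t => Real.sqrt (max (d t) 0 / H u u) with hα_def
  set β : ℝ → ℝ := fun t => Real.sqrt (max (-(d t)) 0 / (-(H w w))) with hβ_def
  set γ : ℝ → V := fun t => x t + α t • u + β t • w with hγ_def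
  -- orthogonality to x t
  have hux : ∀ t, H u (x t) = 0 := by
    intro t; simp [hx_def, huv₀, huv₁]
  have hwx : ∀ t, H w (x t) = 0 := by
    intro t; simp [hx_def, hwv₀, hwv₁]
  -- continuity
  have hxc : Continuous x := by
    apply Continuous.add
    · exact (continuous_const.sub continuous_id).smul continuous_const
    · exact continuous_id.smul continuous_const
  have hdc : Continuous d :=
    continuous_const.sub (hcont.comp (hxc.prodMk hxc))
  have hαc : Continuous α :=
    Real.continuous_sqrt.comp ((hdc.max continuous_const).div_const _)
  have hβc : Continuous β :=
    Real.continuous_sqrt.comp (((hdc.neg).max continuous_const).div_const _)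
  have hγc : Continuous γ :=
    (hxc.add (hαc.smul continuous_const)).add (hβc.smul continuous_const)
  -- value on the level set
  have hval : ∀ t, H (γ t) (γ t) = a := by
    intro t
    have hexp := expand_aux H hsym (x t) u w (α t) (β t) (hux t) (hwx t) hwu
    have hα2 : α t ^ 2 = max (d t) 0 / H u u :=
      Real.sq_sqrt (div_nonneg (le_max_right _ _) hupos.le)
    have hβ2 : β t ^ 2 = max (-(d t)) 0 / (-(H w w)) :=
      Real.sq_sqrt (div_nonneg (le_max_right _ _) (by linarith))
    have hune : H u u ≠ 0 := ne_of_gt hupos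
    have hwne : H w w ≠ 0 := ne_of_lt hwneg
    have h1 : α t ^ 2 * H u u = max (d t) 0 := by
      rw [hα2]; field_simp
    have h2 : β t ^ 2 * H w w = -(max (-(d t)) 0) := by
      rw [hβ2, div_mul_eq_mul_div, div_neg, mul_div_assoc, div_self hwne, mul_one]
    have h3 : max (d t) 0 - max (-(d t)) 0 = d t :=
      max_zero_sub_max_neg_zero_eq_self (d t)
    rw [hγ_def]
    simp only []
    rw [hexp, h1, h2]
    have : H (x t) (x t) = a - d t := by simp [hd_def]
    rw [this]; linarith
  -- endpoints
  have hd0 : d 0 = 0 := by simp [hd_def, hx_def, h₀]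
  have hd1 : d 1 = 0 := by simp [hd_def, hx_def, h₁]
  have hγ0 : γ 0 = v₀ := by
    simp [hγ_def, hα_def, hβ_def, hd0, hx_def]
  have hγ1 : γ 1 = v₁ := by
    simp [hγ_def, hα_def, hβ_def, hd1, hx_def]
  exact ⟨⟨⟨fun t => γ t.1, hγc.comp continuous_subtype_val⟩, hγ0, hγ1⟩,
    fun t => hval t.1⟩
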